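/- Let G act by isometries on a geodesic hyperbolic metric space X acylindrically, and suppose some element g ∈ G acts loxodromically (i.e., the orbit map n ↦ gⁿ·x₀ is a quasi-isometric embedding of ℤ). Then the centralizer of g in G is virtually cyclic. -/

import Mathlib

open Filter Metric

/-- `S` is the image of a geodesic segment from `a` to `b`. -/
def IsGeodesic {X : Type*} [MetricSpace X] (S : Set X) (a b : X) : Prop :=
  ∃ γ : ℝ → X, γ 0 = a ∧ γ (dist a b) = b ∧ S = γ '' Set.Icc 0 (dist a b) ∧
    ∀ s ∈ Set.Icc (0:ℝ) (dist a b), ∀ t ∈ Set.Icc (0:ℝ) (dist a b),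
      dist (γ s) (γ t) = |s - t|

/-- A geodesic metric space: any two points are joined by a geodesic segment. -/
def GeodesicSpace (X : Type*) [MetricSpace X] : Prop :=
  ∀ a b : X, ∃ S : Set X, IsGeodesic S a b

/-- The Gromov product of `a` and `b` with respect to `p`. -/
noncomputable def gp {X : Type*} [MetricSpace X] (p a b : X) : ℝ :=
  (dist p a + dist p b - dist a b) / 2

/-- `X` is δ-hyperbolic in the sense of the four-point inequality. -/
def IsHyperbolic (X : Type*) [MetricSpace X] (δ : ℝ) : Prop :=
  ∀ p a b c : X, min (gp p a b) (gp p b c) - δ ≤ gp p a c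

/-- `f : Y → X` admits a Cannon–Thurston map in the strong sense with respect to
the basepoint `y₀` and the function `M` : `M N → ∞`, and for every geodesic
segment `λ` of `Y` lying outside `B(y₀, N)`, every geodesic of `X` joining the
endpoints of `f(λ)` lies outside `B(f y₀, M N)`. -/
def StrongCT {Y X : Type*} [MetricSpace Y] [MetricSpace X]
    (f : Y → X) (y₀ : Y) (M : ℕ → ℝ) : Prop :=
  Tendsto M atTop atTop ∧
  ∀ (N : ℕ) (a b : Y) (S : Set Y), IsGeodesic S a b →
    (∀ y ∈ S, (N : ℝ) < dist y₀ y) →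
    ∀ T : Set X, IsGeodesic T (f a) (f b) →
      ∀ x ∈ T, M N < dist (f y₀) x

/-- An acylindrical action: for every `ε ≥ 0` there are `R`, `N` such that for
points at distance at least `R`, at most `N` group elements move both points at
most `ε`. -/
def Acylindrical (Γ : Type*) (X : Type*) [Group Γ] [MetricSpace X]
    [MulAction Γ X] : Prop :=
  ∀ ε : ℝ, 0 ≤ ε → ∃ (R : ℝ) (N : ℕ), ∀ x y : X, R ≤ dist x y →
    {g : Γ | dist x (g • x) ≤ ε ∧ dist y (g • y) ≤ ε}.Finite ∧
    Nat.card {g : Γ | dist x (g • x) ≤ ε ∧ dist y (g • y) ≤ ε} ≤ N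

/-- The four-point inequality in "pair-sum" form. -/
lemma four_point {X : Type*} [MetricSpace X] {δ : ℝ} (hhyp : IsHyperbolic X δ)
    (w x y z : X) :
    dist w y + dist x z ≤
      max (dist w z + dist x y) (dist w x + dist y z) + 2 * δ := by
  have H := hhyp w x y z
  simp only [gp] at H
  rcases le_total ((dist w x + dist w y - dist x y) / 2)
      ((dist w y + dist w z - dist y z) / 2) with hc | hc
  · rw [min_eq_left hc] at H
    have h1 := le_max_left (dist w z + dist x y) (dist w x + dist y z)
    linarith
  · rw [min_eq_right hc] at H
    have h2 := le_max_right (dist w z + dist x y) (dist w x + dist y z)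
    linarith

/-- Exponential growth beats linear growth. -/
lemma exists_pow_gt (a b : ℝ) (hb : 0 ≤ b) : ∃ K : ℕ, a + b * K < 2 ^ K := by
  set m : ℕ := ⌈|a| + 2 * b⌉₊ + 1 with hm
  refine ⟨2 * m, ?_⟩
  have hm1 : (1 : ℝ) ≤ (m : ℝ) := by
    have : 1 ≤ m := Nat.le_add_left 1 _
    exact_mod_cast this
  have hmge : |a| + 2 * b + 1 ≤ (m : ℝ) := by
    have h1 : (|a| + 2 * b) ≤ (⌈|a| + 2 * b⌉₊ : ℝ) := Nat.le_ceil _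
    have : (m : ℝ) = (⌈|a| + 2 * b⌉₊ : ℝ) + 1 := by exact_mod_cast rfl
    linarith
  have h2 : (1 : ℝ) + (m : ℝ) ≤ 2 ^ m := by
    have := one_add_mul_le_pow (a := (1 : ℝ)) (by norm_num) m
    norm_num at this
    calc (1:ℝ) + m = 1 + m * 1 := by ring
    _ ≤ 2 ^ m := by simpa using this
  have h3 : ((2 : ℝ) ^ m) ^ 2 = 2 ^ (2 * m) := by
    rw [← pow_mul]; ring_nf
  have h4 : ((1 : ℝ) + m) ^ 2 ≤ ((2 : ℝ) ^ m) ^ 2 := by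
    have h0 : (0:ℝ) ≤ 1 + m := by linarith
    exact pow_le_pow_left₀ h0 h2 2
  have habs : a ≤ |a| := le_abs_self a
  have hnn : 0 ≤ |a| := abs_nonneg a
  have hcast : ((2 * m : ℕ) : ℝ) = 2 * (m : ℝ) := by push_cast; ring
  have key : a + b * ((2 * m : ℕ) : ℝ) < ((1 : ℝ) + m) ^ 2 := by
    rw [hcast]
    nlinarith [mul_le_mul_of_nonneg_left hmge (le_trans zero_le_one hm1),
      mul_nonneg (by linarith : (0:ℝ) ≤ (m:ℝ) - 1) hnn]
  calc a + b * ((2 * m : ℕ) : ℝ) < ((1:ℝ) + m) ^ 2 := key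
  _ ≤ ((2:ℝ) ^ m) ^ 2 := h4
  _ = 2 ^ (2 * m) := h3

/-- if `Γ` acts acylindrically by isometries on a geodesic
hyperbolic space and `g` is loxodromic, then the centralizer of `g` is
virtually cyclic. -/
theorem centralizer_loxodromic_virtually_cyclic {Γ X : Type*} [Group Γ]
    [MetricSpace X] [MulAction Γ X]
    (hiso : ∀ g : Γ, Isometry (fun x : X => g • x))
    (hgeo : GeodesicSpace X) {δ : ℝ} (hhyp : IsHyperbolic X δ)
    (hacyl : Acylindrical Γ X)
    (g : Γ) (x₀ : X)
    (hlox : ∃ (l c : ℝ), 1 ≤ l ∧ 0 ≤ c ∧ ∀ m n : ℤ,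
      (|(m : ℝ) - n|) / l - c ≤ dist ((g ^ m) • x₀) ((g ^ n) • x₀) ∧
      dist ((g ^ m) • x₀) ((g ^ n) • x₀) ≤ l * |(m : ℝ) - n| + c) :
    ∃ C : Subgroup (Subgroup.centralizer {g}), IsCyclic C ∧ C.FiniteIndex := by
  classical
  obtain ⟨l, c, hl, hc, hq⟩ := hlox
  have hl0 : (0 : ℝ) < l := lt_of_lt_of_le zero_lt_one hl
  set δ₀ : ℝ := max δ 0 with hδ₀def
  have hδδ₀ : δ ≤ δ₀ := le_max_left _ _
  have hδ₀ : 0 ≤ δ₀ := le_max_right _ _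
  -- isometric moves
  have hmove : ∀ (γ : Γ) (p q : X), dist (γ • p) (γ • q) = dist p q := by
    intro γ p q; exact (hiso γ).dist_eq p q
  -- the displacement function along the orbit of g
  set A : ℤ → ℝ := fun n => dist x₀ ((g ^ n) • x₀) with hAdef
  have hA_lb : ∀ n : ℤ, |(n : ℝ)| / l - c ≤ A n := by
    intro n
    have h := (hq 0 n).1
    rw [zpow_zero, one_smul] at h
    simpa [hAdef] using h
  -- four point inequality with constant δ₀
  have hFP : ∀ w x y z : X, dist w y + dist x z ≤
      max (dist w z + dist x y) (dist w x + dist y z) + 2 * δ₀ := by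
    intro w x y z
    have := four_point hhyp w x y z
    linarith
  -- symmetry and doubling identities
  have hcancel : ∀ s : ℤ, (g ^ (-s)) • ((g ^ s) • x₀) = x₀ := by
    intro s
    rw [smul_smul, ← zpow_add]
    simp
  have hcancel' : ∀ s : ℤ, (g ^ s) • ((g ^ (-s)) • x₀) = x₀ := by
    intro s
    rw [smul_smul, ← zpow_add]
    simp
  have hAsymm : ∀ s : ℤ, dist ((g ^ (-s)) • x₀) x₀ = A s := by
    intro s
    conv_lhs => rw [← hmove (g ^ s) ((g ^ (-s)) • x₀) x₀, hcancel' s]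
  have hA2 : ∀ s : ℤ, dist ((g ^ (-s)) • x₀) ((g ^ s) • x₀) = A (2 * s) := by
    intro s
    rw [← hmove (g ^ s) ((g ^ (-s)) • x₀) ((g ^ s) • x₀), hcancel' s,
      smul_smul, ← zpow_add]
    have : s + s = 2 * s := by ring
    rw [this]
  -- choose the doubling exponent K
  obtain ⟨K, hK⟩ := exists_pow_gt (l * (A 1 + c)) (4 * l * δ₀)
    (by positivity)
  set Kb : ℝ := A 1 + 4 * δ₀ * K with hKbdef
  -- every coset of ⟨g⟩ in the centralizer has a representative with
  -- displacement at most Kb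
  have main : ∀ h : Γ, h ∈ Subgroup.centralizer {g} →
      ∃ t : ℤ, dist x₀ ((g ^ t * h) • x₀) ≤ Kb := by
    intro h hZmem
    have hgh : g * h = h * g :=
      Subgroup.mem_centralizer_iff.mp hZmem g (Set.mem_singleton g)
    have hC : Commute g h := hgh
    have hcomm : ∀ n : ℤ, g ^ n * h = h * g ^ n := fun n => (hC.zpow_left n).eq
    set u : ℤ → ℝ := fun t => dist x₀ ((g ^ t * h) • x₀) with hudef
    have hu0 : u 0 = dist x₀ (h • x₀) := by
      simp [hudef]
    have hu_lb : ∀ t : ℤ, A t ≤ u t + u 0 := by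
      intro t
      have h3 : dist ((g ^ t * h) • x₀) ((g ^ t) • x₀) = u 0 := by
        rw [mul_smul, hmove, dist_comm, hu0]
      calc A t = dist x₀ ((g ^ t) • x₀) := rfl
      _ ≤ dist x₀ ((g ^ t * h) • x₀) + dist ((g ^ t * h) • x₀) ((g ^ t) • x₀) :=
          dist_triangle _ _ _
      _ = u t + u 0 := by rw [h3]
    -- the sublevel set is finite, choose a minimizer t₀
    have hSfin : {t : ℤ | u t ≤ u 0}.Finite := by
      apply Set.Finite.subset
        (Set.finite_Icc (-⌈l * (2 * u 0 + c)⌉) ⌈l * (2 * u 0 + c)⌉)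
      intro t ht
      simp only [Set.mem_setOf_eq] at ht
      have h1 := hA_lb t
      have h2 : A t ≤ 2 * u 0 := by have := hu_lb t; linarith
      have h3 : |(t : ℝ)| ≤ l * (2 * u 0 + c) := by
        have h4 : |(t : ℝ)| / l ≤ 2 * u 0 + c := by linarith
        calc |(t : ℝ)| = (|(t : ℝ)| / l) * l := by field_simp
        _ ≤ (2 * u 0 + c) * l := by
            exact mul_le_mul_of_nonneg_right h4 (le_of_lt hl0)
        _ = l * (2 * u 0 + c) := by ring
      simp only [Set.mem_Icc]
      constructor
      · have : -(l * (2 * u 0 + c)) ≤ (t : ℝ) := by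
          have := neg_abs_le (t : ℝ); linarith
        have h5 : -((⌈l * (2 * u 0 + c)⌉ : ℤ) : ℝ) ≤ (t : ℝ) := by
          have := Int.le_ceil (l * (2 * u 0 + c)); linarith
        exact_mod_cast h5
      · have : (t : ℝ) ≤ l * (2 * u 0 + c) := le_trans (le_abs_self _) h3
        have h5 : (t : ℝ) ≤ ((⌈l * (2 * u 0 + c)⌉ : ℤ) : ℝ) := by
          have := Int.le_ceil (l * (2 * u 0 + c)); linarith
        exact_mod_cast h5
    obtain ⟨t₀, ht₀S, ht₀min⟩ := Set.exists_min_image _ u hSfin ⟨0, le_refl (u 0)⟩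
    have hmin : ∀ t : ℤ, u t₀ ≤ u t := by
      intro t
      by_cases hcase : u t ≤ u 0
      · exact ht₀min t hcase
      · exact le_trans (ht₀S) (le_of_not_ge hcase)
    refine ⟨t₀, ?_⟩
    show u t₀ ≤ Kb
    by_contra hDbig
    push_neg at hDbig
    -- notation: h' is the minimal representative, D = u t₀ its displacement
    set h' : Γ := g ^ t₀ * h with hh'def
    have hDdist : dist x₀ (h' • x₀) = u t₀ := rfl
    have hcommh' : ∀ n : ℤ, g ^ n * h' = h' * g ^ n := by
      intro n
      have c1 : Commute (g ^ n) (g ^ t₀) :=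
        ((Commute.refl g).zpow_left n).zpow_right t₀
      have c2 : Commute (g ^ n) h := (hC.zpow_left n)
      exact (c1.mul_right c2).eq
    have hu' : ∀ t : ℤ, u t₀ ≤ dist x₀ ((g ^ t * h') • x₀) := by
      intro t
      have he : g ^ t * h' = g ^ (t + t₀) * h := by
        rw [hh'def, ← mul_assoc, ← zpow_add]
      rw [he]
      exact hmin (t + t₀)
    -- distance computations
    have e1 : ∀ s : ℤ, dist ((g ^ s) • x₀) ((g ^ s * h') • x₀) = u t₀ := by
      intro s
      rw [mul_smul, hmove, hDdist]
    have e2 : ∀ s : ℤ, dist ((g ^ s) • x₀) (h' • x₀)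
        = dist x₀ ((g ^ (-s) * h') • x₀) := by
      intro s
      conv_lhs => rw [← hmove (g ^ (-s)) ((g ^ s) • x₀) (h' • x₀),
        hcancel s, smul_smul]
    have e3 : ∀ s : ℤ, dist ((g ^ s * h') • x₀) (h' • x₀) = A s := by
      intro s
      have h1 : (g ^ s * h') • x₀ = h' • ((g ^ s) • x₀) := by
        rw [hcommh' s, mul_smul]
      rw [h1, hmove h' ((g ^ s) • x₀) x₀, dist_comm]
    -- the doubling step
    have hstep : ∀ s : ℤ, A s ≤ u t₀ → A (2 * s) ≤ A s + 4 * δ₀ := by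
      intro s hsD
      have hvp : u t₀ ≤ dist x₀ ((g ^ s * h') • x₀) := hu' s
      have hvm : u t₀ ≤ dist x₀ ((g ^ (-s) * h') • x₀) := hu' (-s)
      -- F1
      have F1 := hFP x₀ ((g ^ s) • x₀) ((g ^ s * h') • x₀) (h' • x₀)
      rw [e1 s, e2 s, e3 s, hDdist] at F1
      -- F1 : dist x₀ ((g^s*h')•x₀) + dist x₀ ((g^(-s)*h')•x₀)
      --        ≤ max (u t₀ + u t₀) (A s + A s) + 2δ₀
      have F1' : dist x₀ ((g ^ s * h') • x₀) + dist x₀ ((g ^ (-s) * h') • x₀)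
          ≤ 2 * u t₀ + 2 * δ₀ := by
        have hmax : max (u t₀ + u t₀)
            (dist x₀ ((g ^ s) • x₀) + A s) ≤ 2 * u t₀ := by
          apply max_le (by linarith)
          have : dist x₀ ((g ^ s) • x₀) = A s := rfl
          linarith
        linarith
      -- F2
      have F2 := hFP (h' • x₀) ((g ^ (-s)) • x₀) x₀ ((g ^ s) • x₀)
      rw [dist_comm (h' • x₀) x₀, hDdist, hA2 s, hAsymm s,
        dist_comm (h' • x₀) ((g ^ s) • x₀), e2 s,
        dist_comm (h' • x₀) ((g ^ (-s)) • x₀)] at F2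
      have e2' : dist ((g ^ (-s)) • x₀) (h' • x₀)
          = dist x₀ ((g ^ s * h') • x₀) := by
        have := e2 (-s)
        rwa [neg_neg] at this
      rw [e2'] at F2
      -- F2 : u t₀ + A (2*s) ≤ max (dist x₀ ((g^(-s)*h')•x₀) + A s)
      --                           (dist x₀ ((g^s*h')•x₀) + A s) + 2δ₀
      have hmax2 : max (dist x₀ ((g ^ (-s) * h') • x₀) + A s)
          (dist x₀ ((g ^ s * h') • x₀) + dist x₀ ((g ^ s) • x₀))
          ≤ A s + u t₀ + 2 * δ₀ := by
        apply max_le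
        · linarith
        · have : dist x₀ ((g ^ s) • x₀) = A s := rfl
          linarith
      linarith
    -- doubling induction
    have hdoub : ∀ k : ℕ, k ≤ K → A ((2 : ℤ) ^ k) ≤ A 1 + 4 * δ₀ * k := by
      intro k
      induction k with
      | zero => intro _; simp
      | succ k ih =>
        intro hk
        have hk' : k ≤ K := Nat.le_of_succ_le hk
        have h1 := ih hk'
        have hkK : (k : ℝ) ≤ (K : ℝ) := by exact_mod_cast hk'
        have h2 : A ((2 : ℤ) ^ k) ≤ u t₀ := by
          have : A 1 + 4 * δ₀ * k ≤ Kb := by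
            rw [hKbdef]
            nlinarith
          linarith
        have h3 := hstep ((2 : ℤ) ^ k) h2
        have h4 : (2 : ℤ) ^ (k + 1) = 2 * (2 : ℤ) ^ k := by ring
        rw [h4]
        push_cast
        linarith
    -- contradiction with the quasi-geodesic lower bound
    have hlow := hA_lb ((2 : ℤ) ^ K)
    have hcast : |(((2 : ℤ) ^ K : ℤ) : ℝ)| = (2 : ℝ) ^ K := by
      push_cast
      exact abs_of_nonneg (by positivity)
    rw [hcast] at hlow
    have hfin := hdoub K (le_refl K)
    -- hK : l * (A 1 + c) + 4*l*δ₀*K < 2^K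
    have hdiv : A 1 + c + 4 * δ₀ * K < (2 : ℝ) ^ K / l := by
      rw [lt_div_iff₀ hl0]
      nlinarith
    linarith
  -- assemble: the cyclic subgroup generated by g has finite index
  set Z := Subgroup.centralizer {g} with hZdef
  have hgZ : g ∈ Z := by
    rw [hZdef]
    exact Subgroup.mem_centralizer_iff.mpr
      (fun j hj => by rw [Set.mem_singleton_iff] at hj; rw [hj])
  set gZ : Z := ⟨g, hgZ⟩ with hgZdef
  refine ⟨Subgroup.zpowers gZ, ?_, ?_⟩
  · -- cyclic
    constructor
    refine ⟨⟨gZ, Subgroup.mem_zpowers gZ⟩, ?_⟩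
    intro x
    obtain ⟨k, hk⟩ := Subgroup.mem_zpowers_iff.mp x.prop
    refine Subgroup.mem_zpowers_iff.mpr ⟨k, ?_⟩
    apply Subtype.ext
    rw [← hk]
    exact SubgroupClass.coe_zpow _ k
  · -- finite index
    set ε : ℝ := max Kb 0 with hεdef
    have hε : 0 ≤ ε := le_max_right _ _
    have hKbε : Kb ≤ ε := le_max_left _ _
    obtain ⟨R, N, hRN⟩ := hacyl ε hε
    set nn : ℤ := (⌈l * (max R 0 + c)⌉₊ : ℤ) with hnndef
    set y : X := (g ^ nn) • x₀ with hydef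
    have hRdist : R ≤ dist x₀ y := by
      have h1 := hA_lb nn
      have hnn0 : (0 : ℝ) ≤ (nn : ℝ) := by
        rw [hnndef]; positivity
      have h2 : l * (max R 0 + c) ≤ (nn : ℝ) := by
        rw [hnndef]
        push_cast
        exact Nat.le_ceil _
      have h3 : max R 0 + c ≤ (nn : ℝ) / l := by
        rw [le_div_iff₀ hl0]
        calc (max R 0 + c) * l = l * (max R 0 + c) := by ring
        _ ≤ (nn : ℝ) := h2
      have h4 : |(nn : ℝ)| = (nn : ℝ) := abs_of_nonneg hnn0
      rw [h4] at h1
      have h5 : R ≤ max R 0 := le_max_left _ _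
      calc R ≤ max R 0 := h5
      _ ≤ (nn : ℝ) / l - c := by linarith
      _ ≤ A nn := h1
      _ = dist x₀ y := rfl
    obtain ⟨hTfin, -⟩ := hRN x₀ y hRdist
    -- the set of small representatives, as a subset of the centralizer
    set P : Set Z := (Subtype.val) ⁻¹'
      {γ : Γ | dist x₀ (γ • x₀) ≤ ε ∧ dist y (γ • y) ≤ ε} with hPdef
    have hPfin : P.Finite :=
      Set.Finite.preimage Subtype.val_injective.injOn hTfin
    haveI : Finite ↥P := hPfin.to_subtype
    have key : ∀ z : Z, ∃ p : Z, p ∈ P ∧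
        (QuotientGroup.mk p : ↥Z ⧸ Subgroup.zpowers gZ) = QuotientGroup.mk z := by
      intro z
      obtain ⟨t, ht⟩ := main z.val z.prop
      have hCzΓ : Commute g (z : Γ) :=
        Subgroup.mem_centralizer_iff.mp z.prop g (Set.mem_singleton g)
      refine ⟨gZ ^ t * z, ?_, ?_⟩
      · simp only [hPdef, Set.mem_preimage, Set.mem_setOf_eq]
        have hcoe : ((gZ ^ t * z : Z) : Γ) = g ^ t * (z : Γ) := by
          rw [Subgroup.coe_mul, SubgroupClass.coe_zpow]
        rw [hcoe]
        have hd1 : dist x₀ ((g ^ t * (z : Γ)) • x₀) ≤ ε := le_trans ht hKbε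
        refine ⟨hd1, ?_⟩
        have hCf : Commute (g ^ nn) (g ^ t * (z : Γ)) :=
          (((Commute.refl g).zpow_left nn).zpow_right t).mul_right
            (hCzΓ.zpow_left nn)
        have hsw : (g ^ t * (z : Γ)) • ((g ^ nn) • x₀)
            = (g ^ nn) • ((g ^ t * (z : Γ)) • x₀) := by
          rw [smul_smul, smul_smul, hCf.eq]
        rw [hydef]
        rw [hsw, hmove]
        exact hd1
      · rw [QuotientGroup.eq]
        have hCz : Commute gZ z := by
          apply Subtype.ext
          rw [Subgroup.coe_mul, Subgroup.coe_mul]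
          exact hCzΓ.eq
        have hred : (gZ ^ t * z)⁻¹ * z = gZ ^ (-t) := by
          rw [mul_inv_rev, ← zpow_neg, mul_assoc, (hCz.zpow_left (-t)).eq,
            ← mul_assoc, inv_mul_cancel, one_mul]
        rw [hred]
        exact Subgroup.mem_zpowers_iff.mpr ⟨-t, rfl⟩
    haveI : Finite (↥Z ⧸ Subgroup.zpowers gZ) := by
      refine Finite.of_surjective
        (fun p : ↥P => (QuotientGroup.mk p.val : ↥Z ⧸ Subgroup.zpowers gZ)) ?_
      intro q
      obtain ⟨z, rfl⟩ := QuotientGroup.mk_surjective q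
      obtain ⟨p, hp, hpq⟩ := key z
      exact ⟨⟨p, hp⟩, hpq⟩
    exact Subgroup.finiteIndex_of_finite_quotient
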